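/- Let p be a prime number and let E⁺ be a valuation ring in which p is nonzero and which is p-adically separated, i.e., ⋂_{n ≥ 0} pⁿE⁺ = 0. Then every p-torsionfree E⁺-module is torsionfree (multiplication by any nonzero element of E⁺ is injective on it), and hence flat over E⁺. -/

import Mathlib

open Finset in
lemma exists_dvd_of_finset {E : Type} [CommRing E] [IsDomain E] [ValuationRing E]
    {ι : Type} (f : ι → E) (s : Finset ι) (hs : s.Nonempty) :
    ∃ i ∈ s, ∀ j ∈ s, f i ∣ f j := by
  classical
  induction s using Finset.induction_on with
  | empty => exact absurd hs (by simp)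
  | @insert a s ha ih =>
    by_cases hse : s.Nonempty
    · obtain ⟨i, hi, hdvd⟩ := ih hse
      rcases ValuationRing.dvd_total (f a) (f i) with h | h
      · refine ⟨a, Finset.mem_insert_self _ _, fun j hj => ?_⟩
        rcases Finset.mem_insert.mp hj with rfl | hj
        · exact dvd_rfl
        · exact h.trans (hdvd j hj)
      · refine ⟨i, Finset.mem_insert_of_mem hi, fun j hj => ?_⟩
        rcases Finset.mem_insert.mp hj with rfl | hj
        · exact h
        · exact hdvd j hj
    · rw [Finset.not_nonempty_iff_eq_empty] at hse
      subst hse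
      exact ⟨a, Finset.mem_insert_self _ _, fun j hj => by
        rcases Finset.mem_insert.mp hj with rfl | hj
        · exact dvd_rfl
        · simp at hj⟩

/-- From the proof of **Lemma 4.7**: over a `p`-adically separated valuation ring `E`
in which `p` is nonzero, every `p`-torsionfree module is torsionfree, and hence flat. -/
theorem torsionfree_and_flat_of_p_torsionfree_of_separated
    (p : ℕ) (hp : p.Prime) (E : Type) [CommRing E] [IsDomain E] [ValuationRing E]
    (hpne : (p : E) ≠ 0)
    (hsep : (⨅ n : ℕ, Ideal.span {(p : E) ^ n}) = ⊥)
    (M : Type) [AddCommGroup M] [Module E M]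
    (htf : Function.Injective fun m : M => (p : E) • m) :
    (∀ c : E, c ≠ 0 → Function.Injective fun m : M => c • m) ∧ Module.Flat E M := by
  classical
  -- p^n acts injectively
  have hpn : ∀ (n : ℕ) (m : M), (p : E) ^ n • m = 0 → m = 0 := by
    intro n
    induction n with
    | zero => intro m hm; simpa using hm
    | succ n ih =>
      intro m hm
      rw [pow_succ, mul_comm, mul_smul] at hm
      have : (p : E) ^ n • m = 0 := by
        have := htf (a₁ := (p : E) ^ n • m) (a₂ := 0) (by simpa using hm)
        simpa using this
      exact ih m this
  -- torsionfree
  have key : ∀ c : E, c ≠ 0 → Function.Injective fun m : M => c • m := by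
    intro c hc
    -- there exists n with ¬ (p^n ∣ c)
    have hex : ∃ n : ℕ, ¬ ((p : E) ^ n ∣ c) := by
      by_contra h
      push_neg at h
      have : c ∈ (⨅ n : ℕ, Ideal.span {(p : E) ^ n}) := by
        rw [Ideal.mem_iInf]
        intro n
        exact Ideal.mem_span_singleton.mpr (h n)
      rw [hsep] at this
      exact hc this
    obtain ⟨n, hn⟩ := hex
    have hcd : c ∣ (p : E) ^ n := (ValuationRing.dvd_total c ((p : E) ^ n)).resolve_right hn
    obtain ⟨d, hd⟩ := hcd
    intro m₁ m₂ h
    simp only at h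
    have : c • (m₁ - m₂) = 0 := by rw [smul_sub, h, sub_self]
    have hpnm : (p : E) ^ n • (m₁ - m₂) = 0 := by
      rw [hd, mul_comm, mul_smul, this, smul_zero]
    have := hpn n _ hpnm
    exact sub_eq_zero.mp this
  refine ⟨key, ?_⟩
  -- flatness via the equational criterion
  apply Module.Flat.of_forall_isTrivialRelation
  intro ι f x hsum
  by_cases hι : Nonempty (Fin ι)
  · obtain ⟨i₀, _, hdvd⟩ := exists_dvd_of_finset f Finset.univ Finset.univ_nonempty
    by_cases hf0 : f i₀ = 0
    · -- all f i = 0 : trivial relation with identity matrix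
      refine ⟨ι, fun i j => if i = j then 1 else 0, x, fun i => ?_, fun j => ?_⟩
      · simp [ite_smul]
      · have : ∀ i, f i = 0 := fun i => by
          simpa [hf0] using hdvd i (Finset.mem_univ i)
        simp [this]
    · -- f i₀ divides all f i; choose d i with f i = f i₀ * d i
      choose d hdd using fun i => hdvd i (Finset.mem_univ i)
      have hsum' : ∑ i, d i • x i = 0 := by
        apply key (f i₀) hf0
        show f i₀ • ∑ i, d i • x i = f i₀ • (0 : M)
        rw [Finset.smul_sum, smul_zero, ← hsum]
        exact Finset.sum_congr rfl fun i _ => by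
          rw [← mul_smul, ← hdd i]
      refine ⟨ι,
        fun i j => (if i = j then 1 else 0) - (if i = i₀ then d j else 0), x,
        fun i => ?_, fun j => ?_⟩
      · simp only [sub_smul, Finset.sum_sub_distrib, ite_smul, one_smul, zero_smul,
          Finset.sum_ite_eq, Finset.mem_univ, if_true]
        by_cases h : i = i₀
        · simp [h, hsum']
        · simp [h]
      · simp only [mul_sub, Finset.sum_sub_distrib, mul_ite, mul_one, mul_zero,
          Finset.sum_ite_eq', Finset.mem_univ, if_true]
        rw [← hdd j, sub_self]
  · exact ⟨ι, fun i j => 0, x, fun i => absurd ⟨i⟩ hι, fun j => absurd ⟨j⟩ hι⟩
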